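/- Let v ∈ ℂ with Im v > 0 and let m, m' be nonzero real numbers. Then e^{2πi·v·|m·m'|} = √(−iv)·|m'|·∫_{−∞}^{∞} e^{−t/2}·e^{πi·v·(m²e^t + m'²e^{−t})} dt = √(−iv)·|m|·∫_{−∞}^{∞} e^{t/2}·e^{πi·v·(m²e^t + m'²e^{−t})} dt, where both integrals converge absolutely and √(−iv) denotes the principal square root (which is positive when v lies on the positive imaginary axis; note Re(−iv) > 0 when Im v > 0). -/

import Mathlib

open Real MeasureTheory

open Set
lemma phi_deriv {c : ℝ} (hc : 0 < c) :
    ∀ x ∈ Ioi (0:ℝ), HasDerivWithinAt (fun x : ℝ => x - c / x) (1 + c / x ^ 2) (Ioi 0) x := by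
  intro x hx
  have hx0 : x ≠ 0 := ne_of_gt hx
  have h1 : HasDerivAt (fun x : ℝ => x⁻¹) (-(x^2)⁻¹) x := hasDerivAt_inv hx0
  have h2 := (hasDerivAt_id x).sub (h1.const_mul c)
  simp only [div_eq_mul_inv]
  have h : HasDerivAt (fun x : ℝ => x - c * x⁻¹) (1 + c * (x ^ 2)⁻¹) x := by
    exact h2.congr_deriv (by ring)
  exact h.hasDerivWithinAt

lemma phi_inj {c : ℝ} (hc : 0 < c) : InjOn (fun x : ℝ => x - c / x) (Ioi 0) := by
  have : StrictMonoOn (fun x : ℝ => x - c / x) (Ioi 0) := by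
    intro x hx y hy hxy
    simp only
    have h1 : c / y < c / x := div_lt_div_of_pos_left hc hx hxy
    linarith
  exact this.injOn

lemma phi_image {c : ℝ} (hc : 0 < c) : (fun x : ℝ => x - c / x) '' (Ioi 0) = univ := by
  apply eq_univ_of_forall
  intro y
  have hs : 0 ≤ y ^ 2 + 4 * c := by nlinarith
  have hsq := Real.sq_sqrt hs
  have hsnn := Real.sqrt_nonneg (y ^ 2 + 4 * c)
  set s := Real.sqrt (y ^ 2 + 4 * c) with hsdef
  have hsy : |y| < s := by
    have : y^2 < s^2 := by rw [hsq]; linarith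
    nlinarith [abs_nonneg y, sq_abs y]
  have hx : 0 < (y + s) / 2 := by
    linarith [(abs_lt.mp hsy).1]
  refine ⟨(y + s) / 2, hx, ?_⟩
  have hxne : (y + s) / 2 ≠ 0 := ne_of_gt hx
  have hcv : c / ((y + s) / 2) = (s - y) / 2 := by
    rw [div_eq_iff hxne]
    nlinarith
  show (y + s) / 2 - c / ((y + s) / 2) = y
  rw [hcv]; ring

lemma inv_image {c : ℝ} (hc : 0 < c) : (fun x : ℝ => c / x) '' (Ioi 0) = Ioi 0 := by
  apply Subset.antisymm
  · rintro _ ⟨x, hx, rfl⟩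
    exact div_pos hc hx
  · intro y hy
    exact ⟨c / y, div_pos hc hy, by field_simp⟩

lemma inv_deriv {c : ℝ} (hc : 0 < c) :
    ∀ x ∈ Ioi (0:ℝ), HasDerivWithinAt (fun x : ℝ => c / x) (-(c / x ^ 2)) (Ioi 0) x := by
  intro x hx
  have hx0 : x ≠ 0 := ne_of_gt hx
  have h1 : HasDerivAt (fun x : ℝ => x⁻¹) (-(x^2)⁻¹) x := hasDerivAt_inv hx0
  have h : HasDerivAt (fun x : ℝ => c / x) (-(c / x ^ 2)) x := by
    simp only [div_eq_mul_inv]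
    exact (h1.const_mul c).congr_deriv (by ring)
  exact h.hasDerivWithinAt

lemma cinv_inj {c : ℝ} (hc : 0 < c) : InjOn (fun x : ℝ => c / x) (Ioi 0) := by
  intro x hx y hy h
  have hx0 : x ≠ 0 := ne_of_gt hx
  have hy0 : y ≠ 0 := ne_of_gt hy
  field_simp at h
  exact h.symm

lemma g_even {b : ℂ} (y : ℝ) :
    Complex.exp (-b * ((-y : ℝ) : ℂ)^2) = Complex.exp (-b * (y:ℂ)^2) := by
  push_cast; rw [neg_sq]

lemma CS {b : ℂ} (hb : 0 < b.re) {c : ℝ} (hc : 0 < c) :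
    IntegrableOn (fun x : ℝ => Complex.exp (-b * (((x - c / x : ℝ)) : ℂ)^2)) (Ioi 0) ∧
    ∫ x in Ioi (0:ℝ), Complex.exp (-b * (((x - c / x : ℝ)) : ℂ)^2)
      = (1/2 : ℂ) * ∫ y : ℝ, Complex.exp (-b * (y:ℂ)^2) := by
  set g : ℝ → ℂ := fun y => Complex.exp (-b * (y:ℂ)^2) with hg
  have hgc : Continuous g := by
    fun_prop
  have hInt : Integrable g := integrable_cexp_neg_mul_sq hb
  have hφcont : ContinuousOn (fun x : ℝ => x - c / x) (Ioi 0) :=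
    continuousOn_id.sub (continuousOn_const.div continuousOn_id (fun x hx => ne_of_gt hx))
  have meas1 : AEStronglyMeasurable (fun x : ℝ => g (x - c / x)) (volume.restrict (Ioi 0)) :=
    (hgc.comp_continuousOn hφcont).aestronglyMeasurable measurableSet_Ioi
  have meas2 : AEStronglyMeasurable (fun x : ℝ => (c / x ^ 2) • g (x - c / x))
      (volume.restrict (Ioi 0)) := by
    apply ContinuousOn.aestronglyMeasurable _ measurableSet_Ioi
    exact ((continuousOn_const.div (continuousOn_pow 2) (fun x hx => pow_ne_zero _ (ne_of_gt hx))).smul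
      (hgc.comp_continuousOn hφcont))
  have A0 := integral_image_eq_integral_abs_deriv_smul measurableSet_Ioi (phi_deriv hc)
    (phi_inj hc) g
  rw [phi_image hc, Measure.restrict_univ] at A0
  have hcomb : IntegrableOn (fun x : ℝ => |1 + c / x ^ 2| • g (x - c / x)) (Ioi 0) := by
    have := (integrableOn_image_iff_integrableOn_abs_deriv_smul measurableSet_Ioi
      (phi_deriv hc) (phi_inj hc) g).mp
    rw [phi_image hc] at this
    exact this hInt.integrableOn
  have habs : ∀ x ∈ Ioi (0:ℝ), |1 + c / x ^ 2| = 1 + c / x ^ 2 := by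
    intro x hx
    have : 0 ≤ c / x ^ 2 := le_of_lt (div_pos hc (pow_pos hx 2))
    rw [abs_of_pos]; linarith
  have I1int : IntegrableOn (fun x : ℝ => g (x - c / x)) (Ioi 0) := by
    apply Integrable.mono hcomb meas1
    filter_upwards [ae_restrict_mem measurableSet_Ioi] with x hx
    rw [norm_smul, Real.norm_eq_abs, abs_abs, habs x hx]
    have h2 : 0 ≤ c / x ^ 2 := le_of_lt (div_pos hc (pow_pos hx 2))
    nlinarith [norm_nonneg (g (x - c / x))]
  have I2int : IntegrableOn (fun x : ℝ => (c / x ^ 2) • g (x - c / x)) (Ioi 0) := by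
    apply Integrable.mono hcomb meas2
    filter_upwards [ae_restrict_mem measurableSet_Ioi] with x hx
    rw [norm_smul, norm_smul, Real.norm_eq_abs, Real.norm_eq_abs, abs_abs, habs x hx]
    have h2 : 0 ≤ c / x ^ 2 := le_of_lt (div_pos hc (pow_pos hx 2))
    rw [abs_of_nonneg h2]
    nlinarith [norm_nonneg (g (x - c / x))]
  have split : ∫ x in Ioi (0:ℝ), |1 + c / x ^ 2| • g (x - c / x)
      = (∫ x in Ioi (0:ℝ), g (x - c / x)) + ∫ x in Ioi (0:ℝ), (c / x ^ 2) • g (x - c / x) := by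
    rw [← integral_add I1int I2int]
    apply setIntegral_congr_fun measurableSet_Ioi
    intro x hx
    simp only
    rw [habs x hx, add_smul, one_smul]
  have B0 := integral_image_eq_integral_abs_deriv_smul measurableSet_Ioi (inv_deriv hc)
    (cinv_inj hc) (fun x : ℝ => g (x - c / x))
  rw [inv_image hc] at B0
  have I2eqI1 : ∫ x in Ioi (0:ℝ), (c / x ^ 2) • g (x - c / x)
      = ∫ x in Ioi (0:ℝ), g (x - c / x) := by
    rw [B0]
    apply setIntegral_congr_fun measurableSet_Ioi
    intro x hx
    simp only [abs_neg]
    have hx0 : x ≠ 0 := ne_of_gt hx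
    have h1 : c / (c / x) = x := by field_simp
    have h2 : 0 ≤ c / x ^ 2 := le_of_lt (div_pos hc (pow_pos hx 2))
    rw [h1, abs_of_nonneg h2]
    congr 1
    rw [show c / x - x = -(x - c / x) by ring]
    exact (g_even (b := b) _).symm
  refine ⟨I1int, ?_⟩
  have final : ∫ y : ℝ, g y = (∫ x in Ioi (0:ℝ), g (x - c / x)) + ∫ x in Ioi (0:ℝ), g (x - c / x) := by
    rw [A0, split, I2eqI1]
  show (∫ x in Ioi (0:ℝ), g (x - c / x)) = (1/2 : ℂ) * ∫ y : ℝ, g y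
  rw [final]
  ring


lemma exp_subst_deriv (m : ℝ) :
    ∀ t ∈ (univ : Set ℝ), HasDerivWithinAt (fun t : ℝ => |m| * Real.exp (t / 2))
      (|m| * Real.exp (t / 2) / 2) univ t := by
  intro t _
  have h1 : HasDerivAt (fun t : ℝ => t / 2) (1 / 2) t := by
    simpa using (hasDerivAt_id t).div_const 2
  have h2 : HasDerivAt (fun t : ℝ => Real.exp (t / 2)) (Real.exp (t / 2) * (1 / 2)) t := h1.exp
  have h3 := h2.const_mul |m|
  have : |m| * (Real.exp (t / 2) * (1 / 2)) = |m| * Real.exp (t / 2) / 2 := by ring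
  rw [this] at h3
  exact h3.hasDerivWithinAt

lemma exp_subst_inj (m : ℝ) (hm : m ≠ 0) :
    InjOn (fun t : ℝ => |m| * Real.exp (t / 2)) univ := by
  intro a _ b _ h
  have hm0 : |m| ≠ 0 := abs_ne_zero.mpr hm
  have := mul_left_cancel₀ hm0 h
  have := Real.exp_injective this
  linarith

lemma exp_subst_image (m : ℝ) (hm : m ≠ 0) :
    (fun t : ℝ => |m| * Real.exp (t / 2)) '' univ = Ioi 0 := by
  have hm0 : 0 < |m| := abs_pos.mpr hm
  apply Subset.antisymm
  · rintro _ ⟨t, -, rfl⟩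
    exact mul_pos hm0 (Real.exp_pos _)
  · intro y hy
    refine ⟨2 * Real.log (y / |m|), mem_univ _, ?_⟩
    have hyd : 0 < y / |m| := div_pos hy hm0
    simp only
    rw [show (2 : ℝ) * Real.log (y / |m|) / 2 = Real.log (y / |m|) by ring,
      Real.exp_log hyd]
    field_simp

lemma square_ident (m m' t : ℝ) (hm : m ≠ 0) (hm' : m' ≠ 0) :
    (|m| * Real.exp (t / 2) - |m * m'| / (|m| * Real.exp (t / 2))) ^ 2
      = m ^ 2 * Real.exp t + m' ^ 2 * Real.exp (-t) - 2 * |m * m'| := by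
  have hm0 : 0 < |m| := abs_pos.mpr hm
  set A : ℝ := |m| * Real.exp (t / 2) with hA
  have hA0 : A ≠ 0 := ne_of_gt (mul_pos hm0 (Real.exp_pos _))
  have hA2 : A ^ 2 = m ^ 2 * Real.exp t := by
    have he : Real.exp (t / 2) ^ 2 = Real.exp t := by
      rw [sq, ← Real.exp_add]
      norm_num
    rw [hA, mul_pow, sq_abs, he]
  have hc2 : |m * m'| ^ 2 = m ^ 2 * m' ^ 2 := by
    rw [sq_abs]; ring
  have hexp : Real.exp (-t) = (Real.exp t)⁻¹ := Real.exp_neg t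
  have hEt : Real.exp t ≠ 0 := (Real.exp_pos t).ne'
  have expand : (A - |m * m'| / A) ^ 2 = A ^ 2 - 2 * |m * m'| + |m * m'| ^ 2 / A ^ 2 := by
    field_simp
    nlinarith [hc2]
  rw [expand, hA2, hc2, hexp]
  have hm2 : m ^ 2 ≠ 0 := pow_ne_zero 2 hm
  field_simp
  linarith [hc2]

lemma key (v : ℂ) (hv : 0 < v.im) (m m' : ℝ) (hm : m ≠ 0) (hm' : m' ≠ 0) :
    Integrable (fun t : ℝ => (Real.exp (t / 2) : ℂ) *
      Complex.exp ((π : ℂ) * Complex.I * v *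
        ((m ^ 2 * Real.exp t + m' ^ 2 * Real.exp (-t) : ℝ) : ℂ))) ∧
    Complex.exp (2 * (π : ℂ) * Complex.I * v * ((|m * m'| : ℝ) : ℂ)) =
      (-Complex.I * v) ^ ((1 : ℂ) / 2) * ((|m| : ℝ) : ℂ) *
        ∫ t : ℝ, (Real.exp (t / 2) : ℂ) *
          Complex.exp ((π : ℂ) * Complex.I * v *
            ((m ^ 2 * Real.exp t + m' ^ 2 * Real.exp (-t) : ℝ) : ℂ)) := by
  set b : ℂ := -((π : ℂ) * Complex.I * v) with hbdef
  have hb : 0 < b.re := by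
    rw [hbdef]
    simp [Complex.mul_re, Complex.mul_im]
    positivity
  have hbne : b ≠ 0 := by
    intro h
    rw [h] at hb; simp at hb
  set c : ℝ := |m * m'| with hcdef
  have hc : 0 < c := abs_pos.mpr (mul_ne_zero hm hm')
  set h : ℝ → ℂ := fun x => Complex.exp (-b * (((x - c / x : ℝ)) : ℂ) ^ 2) with hhdef
  obtain ⟨hCSint, hCSval⟩ := CS hb hc
  -- change of variables via x = |m| e^{t/2}
  have CV := integral_image_eq_integral_abs_deriv_smul MeasurableSet.univ
    (exp_subst_deriv m) (exp_subst_inj m hm) h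
  rw [exp_subst_image m hm, Measure.restrict_univ] at CV
  have CVint := (integrableOn_image_iff_integrableOn_abs_deriv_smul MeasurableSet.univ
    (exp_subst_deriv m) (exp_subst_inj m hm) h).mp
  rw [exp_subst_image m hm] at CVint
  have CVint2 : Integrable (fun t : ℝ =>
      |(|m| * Real.exp (t / 2) / 2)| • h (|m| * Real.exp (t / 2))) := by
    have := CVint hCSint
    rwa [integrableOn_univ] at this
  -- pointwise identity
  have hm0 : 0 < |m| := abs_pos.mpr hm
  set K : ℂ := ((|m| : ℝ) : ℂ) / 2 * Complex.exp (2 * b * (c : ℂ)) with hKdef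
  have hKne : K ≠ 0 := by
    rw [hKdef]
    apply mul_ne_zero
    · simp [hm0.ne']
    · exact Complex.exp_ne_zero _
  have E : ∀ t : ℝ, |(|m| * Real.exp (t / 2) / 2)| • h (|m| * Real.exp (t / 2))
      = K * ((Real.exp (t / 2) : ℂ) *
        Complex.exp ((π : ℂ) * Complex.I * v *
          ((m ^ 2 * Real.exp t + m' ^ 2 * Real.exp (-t) : ℝ) : ℂ))) := by
    intro t
    have hpos : 0 < |m| * Real.exp (t / 2) / 2 := by positivity
    rw [abs_of_pos hpos, Complex.real_smul, hhdef]
    simp only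
    rw [show ((|m| * Real.exp (t / 2) - c / (|m| * Real.exp (t / 2)) : ℝ) : ℂ) ^ 2
        = (((|m| * Real.exp (t / 2) - c / (|m| * Real.exp (t / 2))) ^ 2 : ℝ) : ℂ) by push_cast; ring]
    rw [hcdef] at *
    rw [square_ident m m' t hm hm']
    have expand : -b * (((m ^ 2 * Real.exp t + m' ^ 2 * Real.exp (-t) - 2 * |m * m'| : ℝ)) : ℂ)
        = (π : ℂ) * Complex.I * v * ((m ^ 2 * Real.exp t + m' ^ 2 * Real.exp (-t) : ℝ) : ℂ)
          + 2 * b * ((|m * m'| : ℝ) : ℂ) := by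
      rw [hbdef]
      push_cast
      ring
    rw [expand, Complex.exp_add, hKdef]
    push_cast
    ring
  constructor
  · -- integrability
    have : Integrable (fun t : ℝ => K * ((Real.exp (t / 2) : ℂ) *
        Complex.exp ((π : ℂ) * Complex.I * v *
          ((m ^ 2 * Real.exp t + m' ^ 2 * Real.exp (-t) : ℝ) : ℂ)))) := by
      have := CVint2
      rwa [funext E] at this
    have h2 := this.const_mul K⁻¹
    simpa [← mul_assoc, inv_mul_cancel₀ hKne] using h2
  · -- the integral identity
    have CV2 : ∫ x in Ioi (0:ℝ), h x = K * ∫ t : ℝ, (Real.exp (t / 2) : ℂ) *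
        Complex.exp ((π : ℂ) * Complex.I * v *
          ((m ^ 2 * Real.exp t + m' ^ 2 * Real.exp (-t) : ℝ) : ℂ)) := by
      rw [CV, funext E, integral_const_mul]
    have gauss : ∫ y : ℝ, Complex.exp (-b * (y : ℂ) ^ 2) = ((π : ℂ) / b) ^ ((1:ℂ) / 2) :=
      integral_gaussian_complex hb
    rw [CV2, gauss] at hCSval
    -- hCSval : K * J = 1/2 * (π/b)^(1/2)
    have hvne : v ≠ 0 := by
      intro h; rw [h] at hv; simp at hv
    have hwne : (-Complex.I * v) ≠ 0 :=
      mul_ne_zero (neg_ne_zero.mpr Complex.I_ne_zero) hvne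
    have hre : (-Complex.I * v).re = v.im := by
      simp [Complex.mul_re]
    have harg : (-Complex.I * v).arg ≠ π := by
      intro hcontra
      have := (Complex.arg_eq_pi_iff.mp hcontra).1
      rw [hre] at this
      linarith
    have hπb : ((π : ℂ) / b) = (-Complex.I * v)⁻¹ := by
      rw [hbdef]
      have hπ : (π : ℂ) ≠ 0 := by exact_mod_cast Real.pi_ne_zero
      field_simp
    have hinv : ((π : ℂ) / b) ^ ((1:ℂ) / 2) = ((-Complex.I * v) ^ ((1:ℂ) / 2))⁻¹ := by
      rw [hπb, Complex.inv_cpow _ _ harg]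
    have hpow_ne : (-Complex.I * v) ^ ((1:ℂ) / 2) ≠ 0 := by
      rw [Ne, Complex.cpow_eq_zero_iff]
      tauto
    rw [hinv] at hCSval
    have hJ := (eq_inv_mul_iff_mul_eq₀ hKne).mpr hCSval
    rw [hJ, hKdef]
    have hmC : ((|m| : ℝ) : ℂ) ≠ 0 := by
      exact_mod_cast hm0.ne'
    have hexp1 : Complex.exp (2 * b * (c:ℂ)) * Complex.exp (2 * (π:ℂ) * Complex.I * v * (c:ℂ)) = 1 := by
      rw [← Complex.exp_add, show 2 * b * (c:ℂ) + 2 * (π:ℂ) * Complex.I * v * (c:ℂ) = 0 by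
        rw [hbdef]; ring, Complex.exp_zero]
    have hexpne : Complex.exp (2 * b * (c:ℂ)) ≠ 0 := Complex.exp_ne_zero _
    rw [eq_inv_of_mul_eq_one_left hexp1]
    set w : ℂ := (-Complex.I * v) ^ ((1:ℂ) / 2) with hwdef
    set Eb : ℂ := Complex.exp (2 * b * (c:ℂ)) with hEbdef
    field_simp

/-- integral identity (2.9): for `Im v > 0` and nonzero reals
`m, m'`, `e^{2πiv|mm'|} = √(−iv)·|m'|·∫ e^{−t/2} e^{πiv(m²eᵗ + m'²e⁻ᵗ)} dt
= √(−iv)·|m|·∫ e^{t/2} e^{πiv(m²eᵗ + m'²e⁻ᵗ)} dt`, both integrals converging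
absolutely, with the principal branch of the square root. -/
theorem stmt_12 (v : ℂ) (hv : 0 < v.im) (m m' : ℝ) (hm : m ≠ 0) (hm' : m' ≠ 0) :
    Integrable (fun t : ℝ => (Real.exp (-t / 2) : ℂ) *
      Complex.exp ((π : ℂ) * Complex.I * v *
        ((m ^ 2 * Real.exp t + m' ^ 2 * Real.exp (-t) : ℝ) : ℂ))) ∧
    Integrable (fun t : ℝ => (Real.exp (t / 2) : ℂ) *
      Complex.exp ((π : ℂ) * Complex.I * v *
        ((m ^ 2 * Real.exp t + m' ^ 2 * Real.exp (-t) : ℝ) : ℂ))) ∧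
    Complex.exp (2 * (π : ℂ) * Complex.I * v * ((|m * m'| : ℝ) : ℂ)) =
      (-Complex.I * v) ^ ((1 : ℂ) / 2) * ((|m'| : ℝ) : ℂ) *
        ∫ t : ℝ, (Real.exp (-t / 2) : ℂ) *
          Complex.exp ((π : ℂ) * Complex.I * v *
            ((m ^ 2 * Real.exp t + m' ^ 2 * Real.exp (-t) : ℝ) : ℂ)) ∧
    Complex.exp (2 * (π : ℂ) * Complex.I * v * ((|m * m'| : ℝ) : ℂ)) =
      (-Complex.I * v) ^ ((1 : ℂ) / 2) * ((|m| : ℝ) : ℂ) *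
        ∫ t : ℝ, (Real.exp (t / 2) : ℂ) *
          Complex.exp ((π : ℂ) * Complex.I * v *
            ((m ^ 2 * Real.exp t + m' ^ 2 * Real.exp (-t) : ℝ) : ℂ)) := by
  obtain ⟨hint2, heq2⟩ := key v hv m m' hm hm'
  obtain ⟨hintF, heqF⟩ := key v hv m' m hm' hm
  set F : ℝ → ℂ := fun t : ℝ => (Real.exp (t / 2) : ℂ) *
    Complex.exp ((π : ℂ) * Complex.I * v *
      ((m' ^ 2 * Real.exp t + m ^ 2 * Real.exp (-t) : ℝ) : ℂ)) with hFdef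
  have hFG : (fun t : ℝ => (Real.exp (-t / 2) : ℂ) *
      Complex.exp ((π : ℂ) * Complex.I * v *
        ((m ^ 2 * Real.exp t + m' ^ 2 * Real.exp (-t) : ℝ) : ℂ)))
      = fun t : ℝ => F (-t) := by
    funext t
    rw [hFdef]
    simp only
    rw [show (m' ^ 2 * Real.exp (-t) + m ^ 2 * Real.exp (-(-t))) =
      m ^ 2 * Real.exp t + m' ^ 2 * Real.exp (-t) by rw [neg_neg]; ring]
  have habs : |m * m'| = |m' * m| := by rw [mul_comm]
  refine ⟨?_, hint2, ?_, heq2⟩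
  · rw [hFG]
    exact (MeasurePreserving.integrable_comp_emb
      (Measure.measurePreserving_neg (volume : Measure ℝ))
      (MeasurableEquiv.neg ℝ).measurableEmbedding (g := F)).mpr hintF
  · rw [hFG, integral_neg_eq_self F volume, habs]
    exact heqF
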